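/- For every δ ∈ (0, π/4] and every γ in the secondary region R_δ (the set of points of [-π,π]^d at sup-distance more than δ from every λ with |ψ(λ)| = 1), one has |ψ(γ)|² ≤ cos² δ. -/

import Mathlib

open scoped BigOperators Real

/-- Sign of a Boolean: encodes an element of `{-1,1}`. -/
noncomputable def sgn (b : Bool) : ℝ := if b then 1 else -1

/-- `λ · Z(y)` where `Z(y) = (y_i y_j)_{i<j}`. -/
noncomputable def dotZ (n : ℕ) (lam : Fin n → Fin n → ℝ) (y : Fin n → Bool) : ℝ :=
  ∑ p ∈ Finset.univ.filter (fun p : Fin n × Fin n => p.1 < p.2),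
    lam p.1 p.2 * sgn (y p.1) * sgn (y p.2)

/-- Characteristic function `ψ(λ) = 2^{-n} ∑_{y ∈ {-1,1}^n} e^{i λ · Z(y)}`. -/
noncomputable def psi (n : ℕ) (lam : Fin n → Fin n → ℝ) : ℂ :=
  (1 / 2 ^ n : ℂ) * ∑ y : Fin n → Bool, Complex.exp (Complex.I * (dotZ n lam y : ℝ))

/- ### Auxiliary definitions -/

/-- Symmetrized coefficient matrix. -/
noncomputable def gsym (n : ℕ) (gam : Fin n → Fin n → ℝ) (i j : Fin n) : ℝ :=
  if i < j then gam i j else gam j i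

/-- Row sum at vertex `k`. -/
noncomputable def Srow (n : ℕ) (gam : Fin n → Fin n → ℝ) (k : Fin n) (y : Fin n → Bool) : ℝ :=
  ∑ j ∈ Finset.univ.erase k, gsym n gam k j * sgn (y j)

/-- Part of `dotZ` not involving vertex `k`. -/
noncomputable def Toff (n : ℕ) (gam : Fin n → Fin n → ℝ) (k : Fin n) (y : Fin n → Bool) : ℝ :=
  ∑ i ∈ Finset.univ.erase k, ∑ j ∈ Finset.univ.erase k,
    (if i < j then gam i j * sgn (y i) * sgn (y j) else 0)

lemma sgn_not (b : Bool) : sgn (!b) = - sgn b := by cases b <;> simp [sgn]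

lemma abs_sgn (b : Bool) : |sgn b| = 1 := by cases b <;> simp [sgn]

/- ### Decomposition of `dotZ` -/

lemma dotZ_decomp (n : ℕ) (gam : Fin n → Fin n → ℝ) (k : Fin n) (y : Fin n → Bool) :
    dotZ n gam y = Toff n gam k y + sgn (y k) * Srow n gam k y := by
  classical
  set f : Fin n → Fin n → ℝ :=
    fun i j => if i < j then gam i j * sgn (y i) * sgn (y j) else 0 with hf
  have h0 : dotZ n gam y = ∑ i : Fin n, ∑ j : Fin n, f i j := by
    rw [dotZ, Finset.sum_filter, Fintype.sum_prod_type]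
  have houter : ∑ i : Fin n, ∑ j : Fin n, f i j
      = (∑ j : Fin n, f k j) + ∑ i ∈ Finset.univ.erase k, ∑ j : Fin n, f i j :=
    (Finset.add_sum_erase _ _ (Finset.mem_univ k)).symm
  have hinner : ∀ i : Fin n, ∑ j : Fin n, f i j
      = f i k + ∑ j ∈ Finset.univ.erase k, f i j := fun i =>
    (Finset.add_sum_erase _ _ (Finset.mem_univ k)).symm
  have hkk : f k k = 0 := by simp [hf]
  have hkey : ∀ j ∈ Finset.univ.erase k,
      f k j + f j k = sgn (y k) * (gsym n gam k j * sgn (y j)) := by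
    intro j hj
    have hjk : j ≠ k := Finset.ne_of_mem_erase hj
    rcases lt_or_gt_of_ne (Ne.symm hjk) with h | h
    · have h' : ¬ j < k := by exact not_lt.mpr h.le
      simp only [hf, gsym, if_pos h, if_neg h']
      ring
    · have h' : ¬ k < j := by exact not_lt.mpr h.le
      simp only [hf, gsym, if_pos h, if_neg h']
      ring
  have hsplit : (∑ j : Fin n, f k j) + ∑ i ∈ Finset.univ.erase k, ∑ j : Fin n, f i j
      = (∑ j ∈ Finset.univ.erase k, (f k j + f j k)) + Toff n gam k y := by
    rw [hinner k, hkk, zero_add]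
    have : ∑ i ∈ Finset.univ.erase k, ∑ j : Fin n, f i j
        = (∑ i ∈ Finset.univ.erase k, f i k)
          + ∑ i ∈ Finset.univ.erase k, ∑ j ∈ Finset.univ.erase k, f i j := by
      rw [← Finset.sum_add_distrib]
      exact Finset.sum_congr rfl fun i _ => hinner i
    rw [this, Toff, Finset.sum_add_distrib]
    ring
  have hS : ∑ j ∈ Finset.univ.erase k, (f k j + f j k)
      = sgn (y k) * Srow n gam k y := by
    rw [Srow, Finset.mul_sum]
    exact Finset.sum_congr rfl hkey
  rw [h0, houter, hsplit, hS]; ring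

lemma Srow_update (n : ℕ) (gam : Fin n → Fin n → ℝ) (k : Fin n) (y : Fin n → Bool) (b : Bool) :
    Srow n gam k (Function.update y k b) = Srow n gam k y := by
  refine Finset.sum_congr rfl fun j hj => ?_
  rw [Function.update_of_ne (Finset.ne_of_mem_erase hj)]

lemma Toff_update (n : ℕ) (gam : Fin n → Fin n → ℝ) (k : Fin n) (y : Fin n → Bool) (b : Bool) :
    Toff n gam k (Function.update y k b) = Toff n gam k y := by
  refine Finset.sum_congr rfl fun i hi => Finset.sum_congr rfl fun j hj => ?_
  rw [Function.update_of_ne (Finset.ne_of_mem_erase hi),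
    Function.update_of_ne (Finset.ne_of_mem_erase hj)]

/- ### Pairing identity -/

lemma sum_exp_eq (n : ℕ) (gam : Fin n → Fin n → ℝ) (k : Fin n) :
    ∑ y : Fin n → Bool, Complex.exp (Complex.I * (dotZ n gam y : ℝ))
      = ∑ y : Fin n → Bool,
          Complex.exp (Complex.I * (Toff n gam k y : ℝ)) * Complex.cos (Srow n gam k y : ℝ) := by
  classical
  set F : (Fin n → Bool) → ℂ := fun y => Complex.exp (Complex.I * (dotZ n gam y : ℝ)) with hF
  set flipk : (Fin n → Bool) → (Fin n → Bool) := fun y => Function.update y k (!(y k)) with hflip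
  have hinv : Function.Involutive flipk := by
    intro y
    funext j
    rcases eq_or_ne j k with rfl | hne
    · simp [hflip, Function.update_self]
    · simp [hflip, Function.update_of_ne hne]
  have hsum2 : ∑ y : Fin n → Bool, F y = ∑ y : Fin n → Bool, F (flipk y) :=
    (Fintype.sum_bijective flipk hinv.bijective _ _ fun y => rfl).symm
  have hpair : ∀ y : Fin n → Bool, F y + F (flipk y)
      = 2 * (Complex.exp (Complex.I * (Toff n gam k y : ℝ))
          * Complex.cos (Srow n gam k y : ℝ)) := by
    intro y
    have h1 : dotZ n gam y = Toff n gam k y + sgn (y k) * Srow n gam k y :=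
      dotZ_decomp n gam k y
    have h2 : dotZ n gam (flipk y)
        = Toff n gam k y - sgn (y k) * Srow n gam k y := by
      rw [dotZ_decomp n gam k (flipk y)]
      have hk : (flipk y) k = !(y k) := Function.update_self _ _ _
      rw [hflip] at *
      rw [Toff_update, Srow_update, hk, sgn_not]
      ring
    simp only [hF]
    rw [h1, h2]
    set T := Toff n gam k y
    set S := Srow n gam k y
    have hc : Complex.cos (sgn (y k) * S : ℝ) = Complex.cos (S : ℝ) := by
      cases hyk : y k <;> simp [sgn]
    have h2c : Complex.exp (((sgn (y k) * S : ℝ) : ℂ) * Complex.I)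
          + Complex.exp (-((sgn (y k) * S : ℝ) : ℂ) * Complex.I)
        = 2 * Complex.cos (S : ℝ) := by
      rw [← hc, ← Complex.two_cos]
    calc Complex.exp (Complex.I * ((T + sgn (y k) * S : ℝ) : ℂ))
          + Complex.exp (Complex.I * ((T - sgn (y k) * S : ℝ) : ℂ))
        = Complex.exp (Complex.I * (T : ℂ))
            * (Complex.exp (((sgn (y k) * S : ℝ) : ℂ) * Complex.I)
              + Complex.exp (-((sgn (y k) * S : ℝ) : ℂ) * Complex.I)) := by
          rw [mul_add, ← Complex.exp_add, ← Complex.exp_add]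
          push_cast
          ring_nf
      _ = 2 * (Complex.exp (Complex.I * (T : ℝ)) * Complex.cos (S : ℝ)) := by
          rw [h2c]; ring
  have h2 : (2 : ℂ) * ∑ y : Fin n → Bool, F y
      = 2 * ∑ y : Fin n → Bool,
          Complex.exp (Complex.I * (Toff n gam k y : ℝ)) * Complex.cos (Srow n gam k y : ℝ) := by
    calc (2 : ℂ) * ∑ y : Fin n → Bool, F y
        = (∑ y : Fin n → Bool, F y) + ∑ y : Fin n → Bool, F (flipk y) := by
          rw [← hsum2]; ring
      _ = ∑ y : Fin n → Bool, (F y + F (flipk y)) := by rw [Finset.sum_add_distrib]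
      _ = ∑ y : Fin n → Bool, 2 * (Complex.exp (Complex.I * (Toff n gam k y : ℝ))
            * Complex.cos (Srow n gam k y : ℝ)) := Finset.sum_congr rfl fun y _ => hpair y
      _ = 2 * ∑ y : Fin n → Bool, Complex.exp (Complex.I * (Toff n gam k y : ℝ))
            * Complex.cos (Srow n gam k y : ℝ) := by rw [Finset.mul_sum]
  exact mul_left_cancel₀ two_ne_zero h2

/- ### Product identity -/

lemma sum_cos_two_Srow (n : ℕ) (gam : Fin n → Fin n → ℝ) (k : Fin n) :
    ∑ y : Fin n → Bool, Real.cos (2 * Srow n gam k y)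
      = 2 ^ n * ∏ j ∈ Finset.univ.erase k, Real.cos (2 * gsym n gam k j) := by
  classical
  set h : Fin n → Bool → ℂ := fun j b =>
    if j = k then 1 else Complex.exp (((2 * gsym n gam k j * sgn b : ℝ) : ℂ) * Complex.I) with hh
  have hprod : ∀ y : Fin n → Bool,
      ∏ j : Fin n, h j (y j) = Complex.exp (((2 * Srow n gam k y : ℝ) : ℂ) * Complex.I) := by
    intro y
    rw [← Finset.mul_prod_erase Finset.univ _ (Finset.mem_univ k)]
    have hk1 : h k (y k) = 1 := if_pos rfl
    rw [hk1, one_mul]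
    have : ∀ j ∈ Finset.univ.erase k,
        h j (y j) = Complex.exp (((2 * gsym n gam k j * sgn (y j) : ℝ) : ℂ) * Complex.I) := by
      intro j hj
      exact if_neg (Finset.ne_of_mem_erase hj)
    rw [Finset.prod_congr rfl this, ← Complex.exp_sum]
    congr 1
    rw [Srow, Finset.mul_sum, Complex.ofReal_sum, Finset.sum_mul]
    refine Finset.sum_congr rfl fun j hj => ?_
    push_cast
    ring
  have hfub : ∑ y : Fin n → Bool, ∏ j : Fin n, h j (y j)
      = ∏ j : Fin n, ∑ b : Bool, h j b := by
    rw [Finset.prod_univ_sum]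
    rw [show Fintype.piFinset (fun _ : Fin n => (Finset.univ : Finset Bool)) = Finset.univ from
      Fintype.piFinset_univ]
  have hcol : ∀ j : Fin n, ∑ b : Bool, h j b
      = 2 * (if j = k then 1 else ((Real.cos (2 * gsym n gam k j) : ℝ) : ℂ)) := by
    intro j
    rcases eq_or_ne j k with rfl | hne
    · simp [hh]
    · rw [Fintype.sum_bool]
      simp only [hh, if_neg hne]
      have hT : sgn true = (1 : ℝ) := rfl
      have hFa : sgn false = (-1 : ℝ) := rfl
      rw [hT, hFa, Complex.exp_mul_I, Complex.exp_mul_I]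
      have hb2 : ((2 * gsym n gam k j * (-1 : ℝ) : ℝ) : ℂ)
          = -((2 * gsym n gam k j * (1 : ℝ) : ℝ) : ℂ) := by push_cast; ring
      have ha2 : ((2 * gsym n gam k j * (1 : ℝ) : ℝ) : ℂ)
          = ((2 * gsym n gam k j : ℝ) : ℂ) := by push_cast; ring
      rw [hb2, Complex.cos_neg, Complex.sin_neg, ha2, Complex.ofReal_cos]
      ring
  have hmain : ∑ y : Fin n → Bool, Complex.exp (((2 * Srow n gam k y : ℝ) : ℂ) * Complex.I)
      = ((2 : ℂ) ^ n) * ((∏ j ∈ Finset.univ.erase k, Real.cos (2 * gsym n gam k j) : ℝ) : ℂ) := by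
    calc ∑ y : Fin n → Bool, Complex.exp (((2 * Srow n gam k y : ℝ) : ℂ) * Complex.I)
        = ∑ y : Fin n → Bool, ∏ j : Fin n, h j (y j) :=
          Finset.sum_congr rfl fun y _ => (hprod y).symm
      _ = ∏ j : Fin n, ∑ b : Bool, h j b := hfub
      _ = ∏ j : Fin n, (2 : ℂ) * (if j = k then 1 else ((Real.cos (2 * gsym n gam k j) : ℝ) : ℂ)) :=
          Finset.prod_congr rfl fun j _ => hcol j
      _ = ((2 : ℂ) ^ n) * ∏ j : Fin n,
            (if j = k then 1 else ((Real.cos (2 * gsym n gam k j) : ℝ) : ℂ)) := by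
          rw [Finset.prod_mul_distrib, Finset.prod_const, Finset.card_univ, Fintype.card_fin]
      _ = ((2 : ℂ) ^ n) * ((∏ j ∈ Finset.univ.erase k, Real.cos (2 * gsym n gam k j) : ℝ) : ℂ) := by
          congr 1
          rw [← Finset.mul_prod_erase Finset.univ _ (Finset.mem_univ k), if_pos rfl, one_mul,
            Complex.ofReal_prod]
          exact Finset.prod_congr rfl fun j hj => if_neg (Finset.ne_of_mem_erase hj)
  have := congrArg Complex.re hmain
  rw [Complex.re_sum] at this
  simp only [Complex.exp_ofReal_mul_I_re] at this
  rw [this]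
  rw [show ((2 : ℂ) ^ n) = ((2 ^ n : ℝ) : ℂ) by push_cast; ring, ← Complex.ofReal_mul,
    Complex.ofReal_re]

/- ### Row bound -/

lemma row_bound (n : ℕ) (gam : Fin n → Fin n → ℝ) (k : Fin n) :
    (‖psi n gam‖) ^ 2
      ≤ 1 / 2 + (∏ j ∈ Finset.univ.erase k, Real.cos (2 * gsym n gam k j)) / 2 := by
  classical
  set A : ℝ := ∑ y : Fin n → Bool, |Real.cos (Srow n gam k y)| with hA
  have hpow : (0 : ℝ) < 2 ^ n := by positivity
  have habs : ‖psi n gam‖ ≤ (1 / 2 ^ n) * A := by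
    rw [psi, norm_mul, sum_exp_eq n gam k]
    have h1 : ‖(1 / 2 ^ n : ℂ)‖ = 1 / 2 ^ n := by
      simp [map_div₀, map_pow]
    rw [h1]
    refine mul_le_mul_of_nonneg_left ?_ (by positivity)
    refine le_trans (norm_sum_le _ _) ?_
    rw [hA]
    refine le_of_eq (Finset.sum_congr rfl fun y _ => ?_)
    rw [norm_mul]
    have he : ‖Complex.exp (Complex.I * (Toff n gam k y : ℝ))‖ = 1 := by
      rw [Complex.norm_exp]
      simp
    rw [he, one_mul, ← Complex.ofReal_cos, Complex.norm_real, Real.norm_eq_abs]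
  have hA2 : A ^ 2 ≤ 2 ^ n * ∑ y : Fin n → Bool, (Real.cos (Srow n gam k y)) ^ 2 := by
    have := sq_sum_le_card_mul_sum_sq
      (s := (Finset.univ : Finset (Fin n → Bool)))
      (f := fun y => |Real.cos (Srow n gam k y)|)
    simp only [sq_abs] at this
    calc A ^ 2 ≤ (Finset.univ.card :ℝ) * ∑ y : Fin n → Bool, (Real.cos (Srow n gam k y)) ^ 2 :=
          this
      _ = 2 ^ n * ∑ y : Fin n → Bool, (Real.cos (Srow n gam k y)) ^ 2 := by
          rw [Finset.card_univ, Fintype.card_fun]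
          norm_num
  have hsumsq : ∑ y : Fin n → Bool, (Real.cos (Srow n gam k y)) ^ 2
      = 2 ^ n * (1 / 2) + (2 ^ n
          * ∏ j ∈ Finset.univ.erase k, Real.cos (2 * gsym n gam k j)) / 2 := by
    have h1 : ∀ y : Fin n → Bool, (Real.cos (Srow n gam k y)) ^ 2
        = 1 / 2 + Real.cos (2 * Srow n gam k y) / 2 := fun y => Real.cos_sq _
    rw [Finset.sum_congr rfl fun y _ => h1 y, Finset.sum_add_distrib, Finset.sum_const,
      Finset.card_univ, Fintype.card_fun, ← Finset.sum_div, sum_cos_two_Srow]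
    simp
  have habs' : (‖psi n gam‖) ^ 2 ≤ ((1 / 2 ^ n) * A) ^ 2 := by
    have h0 : (0 : ℝ) ≤ ‖psi n gam‖ := norm_nonneg _
    exact pow_le_pow_left₀ h0 habs 2
  have hfinal : ((1 / 2 ^ n : ℝ) * A) ^ 2
      ≤ 1 / 2 + (∏ j ∈ Finset.univ.erase k, Real.cos (2 * gsym n gam k j)) / 2 := by
    have : ((1 / 2 ^ n : ℝ) * A) ^ 2 = (1 / 2 ^ n) ^ 2 * A ^ 2 := by ring
    rw [this]
    have h2 : (1 / 2 ^ n : ℝ) ^ 2 * A ^ 2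
        ≤ (1 / 2 ^ n) ^ 2 * (2 ^ n * ∑ y : Fin n → Bool, (Real.cos (Srow n gam k y)) ^ 2) :=
      mul_le_mul_of_nonneg_left hA2 (by positivity)
    refine le_trans h2 ?_
    rw [hsumsq]
    rw [show ((1 : ℝ) / 2 ^ n) ^ 2 * (2 ^ n * (2 ^ n * (1 / 2) + (2 ^ n
        * ∏ j ∈ Finset.univ.erase k, Real.cos (2 * gsym n gam k j)) / 2))
      = 1 / 2 + (∏ j ∈ Finset.univ.erase k, Real.cos (2 * gsym n gam k j)) / 2 by
        field_simp]
  exact le_trans habs' hfinal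

/- ### Products of signs -/

lemma prod_neg_one_zpow {α : Type*} (s : Finset α) (f : α → ℤ) :
    ∏ j ∈ s, ((-1 : ℝ) ^ (f j)) = (-1 : ℝ) ^ (∑ j ∈ s, f j) := by
  classical
  induction s using Finset.induction_on with
  | empty => simp
  | insert a s' hx ih =>
    rw [Finset.prod_insert hx, Finset.sum_insert hx, ih, ← zpow_add₀ (by norm_num : (-1 : ℝ) ≠ 0)]

/- ### |ψ| = 1 for even lattice points -/

lemma psi_abs_one (n : ℕ) (m : Fin n → Fin n → ℤ)
    (heven : ∀ k : Fin n,
      Even (∑ j ∈ Finset.univ.erase k, (if k < j then m k j else m j k))) :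
    ‖psi n (fun i j => (π / 2) * (m i j : ℝ))‖ = 1 := by
  classical
  set lam : Fin n → Fin n → ℝ := fun i j => (π / 2) * (m i j : ℝ) with hlam
  -- one flip step
  have hstep : ∀ (k : Fin n) (y : Fin n → Bool), y k = false →
      Complex.exp (Complex.I * (dotZ n lam y : ℝ))
        = Complex.exp (Complex.I * (dotZ n lam (Function.update y k true) : ℝ)) := by
    intro k y hk
    set msym : Fin n → ℤ := fun j => if k < j then m k j else m j k with hmsym
    have hgs : ∀ j : Fin n, gsym n lam k j = (π / 2) * (msym j : ℝ) := by
      intro j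
      rw [gsym, hmsym]
      split <;> rename_i hcase <;> simp [hlam, hcase]
    set t : ℤ := ∑ j ∈ Finset.univ.erase k, (if y j then msym j else - msym j) with ht
    have hSrow : Srow n lam k y = (π / 2) * (t : ℝ) := by
      rw [Srow, ht]
      push_cast
      rw [Finset.mul_sum]
      refine Finset.sum_congr rfl fun j hj => ?_
      rw [hgs j]
      cases hyj : y j <;> simp [sgn] <;> ring
    have hteven : Even t := by
      have hts : t = (∑ j ∈ Finset.univ.erase k, msym j)
          - 2 * ∑ j ∈ Finset.univ.erase k, (if y j then 0 else msym j) := by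
        rw [ht, Finset.mul_sum, ← Finset.sum_sub_distrib]
        refine Finset.sum_congr rfl fun j hj => ?_
        cases hyj : y j <;> simp <;> ring
      obtain ⟨u, hu⟩ := heven k
      refine ⟨u - ∑ j ∈ Finset.univ.erase k, (if y j then 0 else msym j), ?_⟩
      rw [hts, hu]
      ring
    obtain ⟨w, hw⟩ := hteven
    have hSw : Srow n lam k y = π * (w : ℝ) := by
      rw [hSrow, hw]
      push_cast
      ring
    have hd1 : dotZ n lam y = Toff n lam k y - Srow n lam k y := by
      rw [dotZ_decomp n lam k y, hk]
      simp [sgn]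
      ring
    have hd2 : dotZ n lam (Function.update y k true)
        = Toff n lam k y + Srow n lam k y := by
      rw [dotZ_decomp n lam k (Function.update y k true), Toff_update, Srow_update,
        Function.update_self]
      simp [sgn]
    rw [Complex.exp_eq_exp_iff_exists_int]
    refine ⟨-w, ?_⟩
    rw [hd1, hd2, hSw]
    push_cast
    ring
  -- induction on the number of `false` coordinates
  have hmain : ∀ (N : ℕ) (y : Fin n → Bool),
      (Finset.univ.filter (fun j => y j = false)).card ≤ N →
      Complex.exp (Complex.I * (dotZ n lam y : ℝ))
        = Complex.exp (Complex.I * (dotZ n lam (fun _ => true) : ℝ)) := by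
    intro N
    induction N with
    | zero =>
      intro y hy
      have hemp : (Finset.univ.filter (fun j => y j = false)) = ∅ :=
        Finset.card_eq_zero.mp (Nat.le_zero.mp hy)
      have : y = fun _ => true := by
        funext j
        by_contra hj
        have hjf : y j = false := by
          cases hyj : y j
          · rfl
          · exact absurd hyj hj
        have : j ∈ Finset.univ.filter (fun j => y j = false) := by simp [hjf]
        rw [hemp] at this
        exact absurd this (Finset.notMem_empty j)
      rw [this]
    | succ N ih =>
      intro y hy
      by_cases hall : ∀ j, y j = true
      · have : y = fun _ => true := funext hall
        rw [this]
      · push_neg at hall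
        obtain ⟨k, hk⟩ := hall
        have hkf : y k = false := by
          cases hyk : y k
          · rfl
          · exact absurd hyk hk
        rw [hstep k y hkf]
        apply ih
        have hfilter : (Finset.univ.filter fun j => (Function.update y k true) j = false)
            = (Finset.univ.filter fun j => y j = false).erase k := by
          ext j
          rcases eq_or_ne j k with rfl | hne
          · simp [Function.update_self]
          · simp [Function.update_of_ne hne, hne]
        rw [hfilter]
        have hkmem : k ∈ Finset.univ.filter (fun j => y j = false) := by simp [hkf]
        rw [Finset.card_erase_of_mem hkmem]
        omega
  -- conclude
  have hconst : ∑ y : Fin n → Bool, Complex.exp (Complex.I * (dotZ n lam y : ℝ))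
      = (2 ^ n : ℂ) * Complex.exp (Complex.I * (dotZ n lam (fun _ => true) : ℝ)) := by
    rw [Finset.sum_congr rfl fun y _ =>
      hmain (Finset.univ.filter (fun j => y j = false)).card y le_rfl]
    rw [Finset.sum_const, Finset.card_univ, Fintype.card_fun, Fintype.card_bool,
      Fintype.card_fin, nsmul_eq_mul]
    push_cast
    ring
  rw [psi, hconst]
  rw [show (1 / 2 ^ n : ℂ) * ((2 ^ n : ℂ)
      * Complex.exp (Complex.I * (dotZ n lam (fun _ => true) : ℝ)))
    = Complex.exp (Complex.I * (dotZ n lam (fun _ => true) : ℝ)) by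
      field_simp]
  rw [Complex.norm_exp]
  simp

/- ### Main theorem -/

theorem stmt15 (n : ℕ) (hn : 3 ≤ n) (δ : ℝ) (hδ : 0 < δ) (hδ' : δ ≤ π / 4)
    (gam : Fin n → Fin n → ℝ)
    (hbox : ∀ i j : Fin n, i < j → |gam i j| ≤ π)
    (hfar : ∀ lam : Fin n → Fin n → ℝ,
      (∀ i j : Fin n, i < j → |lam i j| ≤ π) →
      ‖psi n lam‖ = 1 →
      ∃ i j : Fin n, i < j ∧ δ < |gam i j - lam i j|) :
    (‖psi n gam‖) ^ 2 ≤ (Real.cos δ) ^ 2 := by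
  classical
  have hπ : (0 : ℝ) < π := Real.pi_pos
  have hcoskey : ∀ x : ℝ, -(2 * δ) < x → x < 2 * δ → (0 : ℝ) ≤ Real.cos x := by
    intro x h1 h2
    refine Real.cos_nonneg_of_mem_Icc ⟨by linarith, by linarith⟩
  set m : Fin n → Fin n → ℤ := fun i j => round (2 * gam i j / π) with hm
  have herr : ∀ i j : Fin n, |gam i j - (π / 2) * m i j| ≤ π / 4 := by
    intro i j
    have h1 : |2 * gam i j / π - round (2 * gam i j / π)| ≤ 1 / 2 := abs_sub_round _
    have h2 : gam i j - (π / 2) * m i j = (π / 2) * (2 * gam i j / π - m i j) := by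
      field_simp
    rw [h2, abs_mul, abs_of_pos (by positivity : (0:ℝ) < π / 2)]
    calc π / 2 * |2 * gam i j / π - (m i j : ℝ)| ≤ π / 2 * (1 / 2) :=
          mul_le_mul_of_nonneg_left h1 (by positivity)
      _ = π / 4 := by ring
  have hcos2δ : (0 : ℝ) ≤ Real.cos (2 * δ) :=
    Real.cos_nonneg_of_mem_Icc ⟨by linarith, by linarith⟩
  -- it suffices to find a good row
  suffices hsuff : ∃ k : Fin n,
      ∏ j ∈ Finset.univ.erase k, Real.cos (2 * gsym n gam k j) ≤ Real.cos (2 * δ) by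
    obtain ⟨k, hk⟩ := hsuff
    calc (‖psi n gam‖) ^ 2
        ≤ 1 / 2 + (∏ j ∈ Finset.univ.erase k, Real.cos (2 * gsym n gam k j)) / 2 :=
          row_bound n gam k
      _ ≤ 1 / 2 + Real.cos (2 * δ) / 2 := by linarith
      _ = (Real.cos δ) ^ 2 := (Real.cos_sq δ).symm
  by_cases hnear : ∀ i j : Fin n, i < j → |gam i j - (π / 2) * m i j| < δ
  · -- all entries near the lattice
    by_cases heven : ∀ k : Fin n,
        Even (∑ j ∈ Finset.univ.erase k, (if k < j then m k j else m j k))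
    · -- even lattice point nearby: contradiction with hfar
      exfalso
      set lam : Fin n → Fin n → ℝ := fun i j => (π / 2) * (m i j : ℝ) with hlam
      have hlambox : ∀ i j : Fin n, i < j → |lam i j| ≤ π := by
        intro i j hij
        have hx : |2 * gam i j / π| ≤ 2 := by
          rw [abs_div, abs_of_pos hπ, div_le_iff₀ hπ, abs_mul]
          have := hbox i j hij
          rw [abs_two]
          linarith
        have h1 : |(m i j : ℝ)| ≤ 5 / 2 := by
          have h2 : |(m i j : ℝ) - 2 * gam i j / π| ≤ 1/2 := by
            rw [abs_sub_comm]
            exact abs_sub_round _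
          calc |(m i j : ℝ)|
              = |((m i j : ℝ) - 2 * gam i j / π) + 2 * gam i j / π| := by ring_nf
            _ ≤ |(m i j : ℝ) - 2 * gam i j / π| + |2 * gam i j / π| := abs_add_le _ _
            _ ≤ 1 / 2 + 2 := add_le_add h2 hx
            _ = 5 / 2 := by norm_num
        have hint : |m i j| ≤ 2 := by
          have h5 : (|m i j| : ℝ) ≤ 5 / 2 := by exact_mod_cast h1
          have h3 : (|m i j| : ℝ) < 3 := lt_of_le_of_lt h5 (by norm_num)
          have h4 : |m i j| < 3 := by exact_mod_cast h3
          omega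
        rw [hlam]
        simp only [abs_mul, abs_of_pos (by positivity : (0:ℝ) < π / 2)]
        calc π / 2 * |(m i j : ℝ)| ≤ π / 2 * 2 := by
              refine mul_le_mul_of_nonneg_left ?_ (by positivity)
              rw [← Int.cast_abs]
              exact_mod_cast hint
          _ = π := by ring
      obtain ⟨i, j, hij, hgt⟩ := hfar lam hlambox (psi_abs_one n m heven)
      have := hnear i j hij
      rw [hlam] at hgt
      simp only at hgt
      linarith
    · -- odd vertex: row product is nonpositive
      push_neg at heven
      obtain ⟨k, hkodd⟩ := heven
      rw [Int.not_even_iff_odd] at hkodd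
      refine ⟨k, ?_⟩
      set msym : Fin n → ℤ := fun j => if k < j then m k j else m j k with hmsym
      set esym : Fin n → ℝ := fun j => gsym n gam k j - (π / 2) * (msym j : ℝ) with hesym
      have hesmall : ∀ j ∈ Finset.univ.erase k, |esym j| < δ := by
        intro j hj
        have hjk : j ≠ k := Finset.ne_of_mem_erase hj
        simp only [hesym, hmsym, gsym]
        rcases lt_or_gt_of_ne (Ne.symm hjk) with h | h
        · rw [if_pos h, if_pos h]
          exact hnear k j h
        · rw [if_neg (not_lt.mpr h.le), if_neg (not_lt.mpr h.le)]
          exact hnear j k h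
      have hfac : ∀ j ∈ Finset.univ.erase k,
          Real.cos (2 * gsym n gam k j) = (-1 : ℝ) ^ (msym j) * Real.cos (2 * esym j) := by
        intro j hj
        have : 2 * gsym n gam k j = 2 * esym j + (msym j : ℝ) * π := by
          rw [hesym]
          ring
        rw [this, Real.cos_add_int_mul_pi]
      rw [Finset.prod_congr rfl hfac, Finset.prod_mul_distrib, prod_neg_one_zpow,
        Odd.neg_one_zpow hkodd]
      have hposprod : (0 : ℝ) ≤ ∏ j ∈ Finset.univ.erase k, Real.cos (2 * esym j) := by
        refine Finset.prod_nonneg fun j hj => ?_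
        have h1 := hesmall j hj
        have h2 : |2 * esym j| < 2 * δ := by
          rw [abs_mul, abs_two]
          linarith
        obtain ⟨ha, hb⟩ := abs_lt.mp h2
        exact hcoskey _ ha hb
      calc (-1 : ℝ) * ∏ j ∈ Finset.univ.erase k, Real.cos (2 * esym j) ≤ 0 := by
            nlinarith
        _ ≤ Real.cos (2 * δ) := hcos2δ
  · -- some entry is far from the lattice
    push_neg at hnear
    obtain ⟨i, j, hij, hfarij⟩ := hnear
    refine ⟨i, ?_⟩
    have hjmem : j ∈ Finset.univ.erase i := by
      simp [Finset.mem_erase, (ne_of_gt hij)]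
    set e : ℝ := gam i j - (π / 2) * m i j with he
    have heub : |e| ≤ π / 4 := herr i j
    have hefac : Real.cos (2 * gsym n gam i j) = (-1 : ℝ) ^ (m i j) * Real.cos (2 * e) := by
      have h1 : gsym n gam i j = gam i j := if_pos hij
      have h2 : 2 * gam i j = 2 * e + (m i j : ℝ) * π := by
        rw [he]
        ring
      rw [h1, h2, Real.cos_add_int_mul_pi]
    have hcose : Real.cos (2 * e) ≤ Real.cos (2 * δ) := by
      have h1 : Real.cos (2 * e) = Real.cos |2 * e| := (Real.cos_abs _).symm
      rw [h1]
      refine Real.cos_le_cos_of_nonneg_of_le_pi (by linarith) ?_ ?_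
      · rw [abs_mul, abs_two]
        linarith
      · rw [abs_mul, abs_two]
        linarith
    have hcose0 : 0 ≤ Real.cos (2 * e) := by
      have h2 : |2 * e| ≤ π / 2 := by
        rw [abs_mul, abs_two]
        linarith
      refine Real.cos_nonneg_of_mem_Icc ⟨?_, ?_⟩
      · have := abs_le.mp h2
        linarith
      · have := abs_le.mp h2
        linarith
    have habsfac : |Real.cos (2 * gsym n gam i j)| ≤ Real.cos (2 * δ) := by
      have hone : |(-1 : ℝ) ^ (m i j)| = 1 := by
        rcases Int.even_or_odd (m i j) with h | h
        · rw [h.neg_one_zpow, abs_one]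
        · rw [h.neg_one_zpow]
          norm_num
      rw [hefac, abs_mul, hone, one_mul, abs_of_nonneg hcose0]
      exact hcose
    calc ∏ j' ∈ Finset.univ.erase i, Real.cos (2 * gsym n gam i j')
        ≤ |∏ j' ∈ Finset.univ.erase i, Real.cos (2 * gsym n gam i j')| := le_abs_self _
      _ = ∏ j' ∈ Finset.univ.erase i, |Real.cos (2 * gsym n gam i j')| :=
          Finset.abs_prod _ _
      _ = |Real.cos (2 * gsym n gam i j)|
          * ∏ j' ∈ (Finset.univ.erase i).erase j, |Real.cos (2 * gsym n gam i j')| :=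
          (Finset.mul_prod_erase _ _ hjmem).symm
      _ ≤ |Real.cos (2 * gsym n gam i j)| * 1 := by
          refine mul_le_mul_of_nonneg_left ?_ (abs_nonneg _)
          refine Finset.prod_le_one (fun _ _ => abs_nonneg _) fun _ _ => ?_
          exact Real.abs_cos_le_one _
      _ = |Real.cos (2 * gsym n gam i j)| := mul_one _
      _ ≤ Real.cos (2 * δ) := habsfac
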